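/- arXiv:2506.03838 — 3 statements merged into one kernel-verified Lean document; each statement's English description precedes it below -/
import Mathlib

section
/- Let z₁ = x₁e^{iα₁}, z₂ = x₂e^{iα₂} with x₁, x₂ > 0 and α₁, α₂ ∈ ℝ. Let A = M(x₁,α₁)·E·M(x₂,α₂)·E⁻¹ and A₀ = M(x₁,0)·E·M(x₂,0)·E⁻¹, with M and E as above. Then |tr(A)| ≤ tr(A₀). -/
open Complex

noncomputable def Mmat (x α : ℝ) : Matrix (Fin 3) (Fin 3) ℂ :=
  !![0, 0, (x : ℂ); 0, Complex.exp (α * I), 0; ((x : ℂ))⁻¹, 0, 0]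

noncomputable def Emat : Matrix (Fin 3) (Fin 3) ℂ :=
  !![-1, (Real.sqrt 2 : ℝ), 1; -(Real.sqrt 2 : ℝ), 1, 0; 1, 0, 0]

noncomputable def EinvMat : Matrix (Fin 3) (Fin 3) ℂ :=
  !![0, 0, 1; 0, 1, (Real.sqrt 2 : ℝ); 1, -(Real.sqrt 2 : ℝ), -1]

lemma sqrt2_sq : ((Real.sqrt 2 : ℝ) : ℂ) * ((Real.sqrt 2 : ℝ) : ℂ) = 2 := by
  norm_cast
  rw [Real.mul_self_sqrt (by norm_num)]

lemma Emat_inv : Emat⁻¹ = EinvMat := by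
  apply Matrix.inv_eq_right_inv
  show Emat * EinvMat = 1
  ext i j
  fin_cases i <;> fin_cases j <;>
    simp [Emat, EinvMat, Matrix.mul_apply, Fin.sum_univ_three, Matrix.one_apply] <;>
    linear_combination sqrt2_sq

lemma trace_formula (x₁ x₂ α₁ α₂ : ℝ) :
    Matrix.trace (Mmat x₁ α₁ * Emat * Mmat x₂ α₂ * Emat⁻¹) =
      (x₁ : ℂ) * x₂ + (x₁ : ℂ)⁻¹ * x₂ + ((x₁ : ℂ) * x₂)⁻¹ +
        Complex.exp (α₁ * I) * Complex.exp (α₂ * I) +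
        2 * x₂ * Complex.exp (α₁ * I) + 2 * (x₁ : ℂ)⁻¹ * Complex.exp (α₂ * I) := by
  rw [Emat_inv]
  simp [Mmat, Emat, EinvMat, Matrix.trace_fin_three, Matrix.mul_apply,
    Fin.sum_univ_three]
  linear_combination (x₂ * Complex.exp (α₁ * I) + (x₁:ℂ)⁻¹ * Complex.exp (α₂ * I)) * sqrt2_sq

theorem trace_dominated (x₁ x₂ α₁ α₂ : ℝ) (h₁ : 0 < x₁) (h₂ : 0 < x₂) :
    ‖Matrix.trace (Mmat x₁ α₁ * Emat * Mmat x₂ α₂ * Emat⁻¹)‖ ≤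
      (Matrix.trace (Mmat x₁ 0 * Emat * Mmat x₂ 0 * Emat⁻¹)).re ∧
    (Matrix.trace (Mmat x₁ 0 * Emat * Mmat x₂ 0 * Emat⁻¹)).im = 0 := by
  rw [trace_formula, trace_formula]
  have e0 : Complex.exp ((0:ℝ) * I) = 1 := by simp
  rw [e0]
  have habs1 : ‖Complex.exp (α₁ * I)‖ = 1 := by
    rw [Complex.norm_exp]; simp
  have habs2 : ‖Complex.exp (α₂ * I)‖ = 1 := by
    rw [Complex.norm_exp]; simp
  set R : ℝ := x₁ * x₂ + x₁⁻¹ * x₂ + (x₁ * x₂)⁻¹ + 1 + 2 * x₂ + 2 * x₁⁻¹ with hR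
  have hre : ((x₁ : ℂ) * x₂ + (x₁ : ℂ)⁻¹ * x₂ + ((x₁ : ℂ) * x₂)⁻¹ + 1 * 1 + 2 * x₂ * 1 +
      2 * (x₁ : ℂ)⁻¹ * 1) = ((R : ℝ) : ℂ) := by
    rw [hR]; push_cast; ring
  rw [hre]
  refine ⟨?_, Complex.ofReal_im R⟩
  rw [Complex.ofReal_re]
  have h0 : ((x₁ : ℂ) * x₂ + (x₁ : ℂ)⁻¹ * x₂ + ((x₁ : ℂ) * x₂)⁻¹)
      = ((x₁ * x₂ + x₁⁻¹ * x₂ + (x₁ * x₂)⁻¹ : ℝ) : ℂ) := by push_cast; ring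
  calc ‖(x₁ : ℂ) * x₂ + (x₁ : ℂ)⁻¹ * x₂ + ((x₁ : ℂ) * x₂)⁻¹ +
        Complex.exp (α₁ * I) * Complex.exp (α₂ * I) +
        2 * x₂ * Complex.exp (α₁ * I) + 2 * (x₁ : ℂ)⁻¹ * Complex.exp (α₂ * I)‖
      ≤ ‖(x₁ : ℂ) * x₂ + (x₁ : ℂ)⁻¹ * x₂ + ((x₁ : ℂ) * x₂)⁻¹‖ +
        ‖Complex.exp (α₁ * I) * Complex.exp (α₂ * I)‖ +
        ‖2 * x₂ * Complex.exp (α₁ * I)‖ +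
        ‖2 * (x₁ : ℂ)⁻¹ * Complex.exp (α₂ * I)‖ := by
          refine le_trans (norm_add_le _ _) ?_
          gcongr
          refine le_trans (norm_add_le _ _) ?_
          first
            | (gcongr; exact norm_add_le _ _)
            | gcongr
    _ = R := by
        rw [h0, hR]
        simp only [norm_mul, norm_inv, habs1, habs2, Complex.norm_real, Real.norm_eq_abs, Complex.norm_two,
          mul_one]
        rw [abs_of_pos (show (0:ℝ) < x₁ * x₂ + x₁⁻¹ * x₂ + (x₁ * x₂)⁻¹ by positivity),
          abs_of_pos h₂, abs_of_pos h₁]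
end

section
/- Let x₁, …, x_r > 0 and α₁, …, α_r ∈ ℝ, and let P = M(x_r,α_r)·E⁻¹ · M(x_{r-1},α_{r-1})·E⁻¹ ⋯ M(x_1,α_1)·E⁻¹, with M and E as above. Then P is upper triangular with diagonal entries (x₁⋯x_r, e^{i(α₁+⋯+α_r)}, 1/(x₁⋯x_r)). In particular the spectral radius of P equals max(x₁⋯x_r, 1/(x₁⋯x_r)). -/
open Complex

lemma hEinv : Emat⁻¹ = !![0, 0, 1; 0, 1, ((Real.sqrt 2 : ℝ) : ℂ); 1, -((Real.sqrt 2 : ℝ) : ℂ), -1] := by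
  apply Matrix.inv_eq_right_inv
  have h2 : ((Real.sqrt 2 : ℝ) : ℂ) * ((Real.sqrt 2 : ℝ) : ℂ) = 2 := by
    norm_cast
    rw [Real.mul_self_sqrt (by norm_num)]
  ext i j
  fin_cases i <;> fin_cases j <;>
    simp [Emat, Matrix.mul_apply, Fin.sum_univ_three, Matrix.one_apply, h2] <;> ring_nf <;>
    simp [h2] <;> ring

lemma hA (x α : ℝ) : Mmat x α * Emat⁻¹ =
    !![(x : ℂ), -((Real.sqrt 2 : ℝ) : ℂ) * x, -(x : ℂ);
       0, Complex.exp (α * I), ((Real.sqrt 2 : ℝ) : ℂ) * Complex.exp (α * I);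
       0, 0, ((x : ℂ))⁻¹] := by
  rw [hEinv]
  ext i j
  fin_cases i <;> fin_cases j <;>
    simp [Mmat, Matrix.mul_apply, Fin.sum_univ_three, Matrix.vecHead, Matrix.vecTail] <;> ring

lemma hAtri (x α : ℝ) : Matrix.BlockTriangular (Mmat x α * Emat⁻¹) id := by
  rw [hA]
  intro i j hij
  fin_cases i <;> fin_cases j <;> first
    | exact absurd hij (by decide)
    | simp [Matrix.vecHead, Matrix.vecTail]

lemma prod_tri (L : List (Matrix (Fin 3) (Fin 3) ℂ))
    (h : ∀ A ∈ L, Matrix.BlockTriangular A id) :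
    Matrix.BlockTriangular L.prod id ∧
      ∀ i, L.prod i i = (L.map (fun A => A i i)).prod := by
  induction L with
  | nil => exact ⟨Matrix.blockTriangular_one, fun i => by simp [Matrix.one_apply]⟩
  | cons A L ih =>
    have hA : Matrix.BlockTriangular A id := h A List.mem_cons_self
    obtain ⟨htri, hdiag⟩ := ih (fun B hB => h B (List.mem_cons_of_mem A hB))
    refine ⟨hA.mul htri, fun i => ?_⟩
    rw [List.prod_cons, List.map_cons, List.prod_cons, ← hdiag i]
    rw [Matrix.mul_apply]
    rw [Finset.sum_eq_single i]
    · intro k _ hk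
      rcases lt_or_gt_of_ne hk with hlt | hgt
      · rw [hA hlt, zero_mul]
      · rw [htri hgt, mul_zero]
    · intro hi; exact absurd (Finset.mem_univ i) hi

lemma hAdiag (x α : ℝ) :
    (Mmat x α * Emat⁻¹) 0 0 = (x : ℂ) ∧
    (Mmat x α * Emat⁻¹) 1 1 = Complex.exp (α * I) ∧
    (Mmat x α * Emat⁻¹) 2 2 = ((x : ℂ))⁻¹ := by
  rw [hA]
  refine ⟨by simp, by simp, by simp⟩

noncomputable def specRad (A : Matrix (Fin 3) (Fin 3) ℂ) : ℝ :=
  sSup {s : ℝ | ∃ μ : ℂ, (Matrix.charpoly A).IsRoot μ ∧ s = ‖μ‖}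

theorem product_upper_triangular (r : ℕ) (x α : Fin r → ℝ) (hx : ∀ j, 0 < x j) :
    let P : Matrix (Fin 3) (Fin 3) ℂ :=
      (List.ofFn fun j : Fin r => Mmat (x j.rev) (α j.rev) * Emat⁻¹).prod
    (∀ i j : Fin 3, j < i → P i j = 0) ∧
    P 0 0 = ∏ j, (x j : ℂ) ∧
    P 1 1 = Complex.exp ((∑ j, α j : ℝ) * I) ∧
    P 2 2 = (∏ j, (x j : ℂ))⁻¹ ∧
    specRad P = max (∏ j, x j) (∏ j, x j)⁻¹ := by
  intro P
  have hPdef : P = (List.ofFn fun j : Fin r => Mmat (x j.rev) (α j.rev) * Emat⁻¹).prod := rfl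
  set p : ℝ := ∏ j, x j with hpdef
  have hp0 : 0 < p := Finset.prod_pos (fun j _ => hx j)
  have hmem : ∀ A ∈ (List.ofFn fun j : Fin r => Mmat (x j.rev) (α j.rev) * Emat⁻¹),
      Matrix.BlockTriangular A id := by
    intro A hAmem
    rw [List.mem_ofFn] at hAmem
    obtain ⟨j, rfl⟩ := hAmem
    exact hAtri _ _
  obtain ⟨htri, hdiag⟩ := prod_tri _ hmem
  rw [← hPdef] at htri hdiag
  have hd : ∀ i : Fin 3, P i i = ∏ j : Fin r, (Mmat (x j.rev) (α j.rev) * Emat⁻¹) i i := by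
    intro i
    rw [hdiag i, List.map_ofFn, List.prod_ofFn]
    rfl
  have h00 : P 0 0 = ∏ j, (x j : ℂ) := by
    rw [hd 0]
    have : ∀ j : Fin r, (Mmat (x j.rev) (α j.rev) * Emat⁻¹) 0 0 = ((x j.rev : ℝ) : ℂ) :=
      fun j => (hAdiag _ _).1
    rw [Finset.prod_congr rfl (fun j _ => this j)]
    exact Equiv.prod_comp Fin.revPerm (fun j => ((x j : ℝ) : ℂ))
  have h11 : P 1 1 = Complex.exp ((∑ j, α j : ℝ) * I) := by
    rw [hd 1]
    have : ∀ j : Fin r, (Mmat (x j.rev) (α j.rev) * Emat⁻¹) 1 1 =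
        Complex.exp ((α j.rev : ℝ) * I) := fun j => (hAdiag _ _).2.1
    rw [Finset.prod_congr rfl (fun j _ => this j)]
    have hrev : (∏ j : Fin r, Complex.exp ((α j.rev : ℝ) * I)) =
        ∏ j : Fin r, Complex.exp ((α j : ℝ) * I) :=
      Equiv.prod_comp Fin.revPerm (fun j => Complex.exp ((α j : ℝ) * I))
    rw [hrev, ← Complex.exp_sum]
    congr 1
    rw [← Finset.sum_mul]
    norm_cast
  have h22 : P 2 2 = (∏ j, (x j : ℂ))⁻¹ := by
    rw [hd 2]
    have : ∀ j : Fin r, (Mmat (x j.rev) (α j.rev) * Emat⁻¹) 2 2 = ((x j.rev : ℝ) : ℂ)⁻¹ :=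
      fun j => (hAdiag _ _).2.2
    rw [Finset.prod_congr rfl (fun j _ => this j)]
    have hrev : (∏ j : Fin r, ((x j.rev : ℝ) : ℂ)⁻¹) = ∏ j : Fin r, ((x j : ℝ) : ℂ)⁻¹ :=
      Equiv.prod_comp Fin.revPerm (fun j => ((x j : ℝ) : ℂ)⁻¹)
    rw [hrev, ← Finset.prod_inv_distrib]
  refine ⟨fun i j hij => htri hij, h00, h11, h22, ?_⟩
  -- spectral radius
  have hprod : (∏ j, (x j : ℂ)) = (p : ℂ) := by push_cast [hpdef]; rfl
  have hcp : Matrix.charpoly P =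
      (Polynomial.X - Polynomial.C ((p : ℂ))) * ((Polynomial.X - Polynomial.C
        (Complex.exp ((∑ j, α j : ℝ) * I))) * (Polynomial.X - Polynomial.C ((p : ℂ))⁻¹)) := by
    rw [Matrix.charpoly_of_upperTriangular P htri, Fin.prod_univ_three, h00, h11, h22, hprod,
      mul_assoc]
  have hroot : ∀ μ : ℂ, (Matrix.charpoly P).IsRoot μ ↔
      (μ = (p : ℂ) ∨ μ = Complex.exp ((∑ j, α j : ℝ) * I) ∨ μ = ((p : ℂ))⁻¹) := by
    intro μ
    rw [hcp]
    simp [Polynomial.IsRoot, mul_eq_zero, sub_eq_zero]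
  have hS : {s : ℝ | ∃ μ : ℂ, (Matrix.charpoly P).IsRoot μ ∧ s = ‖μ‖} =
      {p, 1, p⁻¹} := by
    ext s
    simp only [Set.mem_setOf_eq, Set.mem_insert_iff, Set.mem_singleton_iff]
    constructor
    · rintro ⟨μ, hμ, rfl⟩
      rcases (hroot μ).mp hμ with rfl | rfl | rfl
      · left; rw [Complex.norm_real, Real.norm_eq_abs, abs_of_pos hp0]
      · right; left; exact Complex.norm_exp_ofReal_mul_I _
      · right; right; rw [norm_inv, Complex.norm_real, Real.norm_eq_abs, abs_of_pos hp0]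
    · rintro (rfl | rfl | rfl)
      · exact ⟨(p : ℂ), (hroot _).mpr (Or.inl rfl),
          by rw [Complex.norm_real, Real.norm_eq_abs, abs_of_pos hp0]⟩
      · exact ⟨Complex.exp ((∑ j, α j : ℝ) * I), (hroot _).mpr (Or.inr (Or.inl rfl)),
          (Complex.norm_exp_ofReal_mul_I _).symm⟩
      · exact ⟨((p : ℂ))⁻¹, (hroot _).mpr (Or.inr (Or.inr rfl)),
          by rw [norm_inv, Complex.norm_real, Real.norm_eq_abs, abs_of_pos hp0]⟩
  have hfin : ({p, 1, p⁻¹} : Set ℝ).Finite :=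
    (Set.finite_singleton _).insert _ |>.insert _
  have hmax1 : (1 : ℝ) ≤ max p p⁻¹ := by
    rcases le_total 1 p with h | h
    · exact le_max_of_le_left h
    · exact le_max_of_le_right (one_le_inv_iff₀.mpr ⟨hp0, h⟩)
  rw [specRad, hS]
  apply le_antisymm
  · apply csSup_le ⟨p, Or.inl rfl⟩
    rintro s (rfl | rfl | rfl)
    · exact le_max_left _ _
    · exact hmax1
    · exact le_max_right _ _
  · apply le_csSup hfin.bddAbove
    rcases max_cases p p⁻¹ with ⟨h, _⟩ | ⟨h, _⟩
    · rw [h]; exact Or.inl rfl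
    · rw [h]; exact Or.inr (Or.inr rfl)
end

section
/- Let x₁, …, x_r > 0 and α₁, …, α_r ∈ ℝ, let P = M(x_r,α_r)·E ⋯ M(x_1,α_1)·E and P₀ = M(x_r,0)·E ⋯ M(x_1,0)·E, with M and E as above. Then the spectral radius of P equals the spectral radius of P₀, both being max(x₁⋯x_r, 1/(x₁⋯x_r)). -/
open Complex

lemma MmatE (x α : ℝ) : Mmat x α * Emat =
    !![(x : ℂ), 0, 0;
       -(Real.sqrt 2 : ℝ) * Complex.exp (α * I), Complex.exp (α * I), 0;
       -((x : ℂ))⁻¹, (Real.sqrt 2 : ℝ) * ((x : ℂ))⁻¹, ((x : ℂ))⁻¹] := by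
  ext i j
  fin_cases i <;> fin_cases j <;>
    simp [Mmat, Emat, Matrix.mul_apply, Fin.sum_univ_three, Matrix.vecHead, Matrix.vecTail] <;>
    ring

/-- Key structural lemma: products of the `Mmat * Emat` blocks are lower
triangular with explicit diagonal entries. -/
lemma key (l : List (ℝ × ℝ)) :
    let Q := (l.map fun p => Mmat p.1 p.2 * Emat).prod
    (∀ i j : Fin 3, i < j → Q i j = 0) ∧
      Q 0 0 = (l.map fun p => ((p.1 : ℂ))).prod ∧
      Q 1 1 = (l.map fun p => Complex.exp (p.2 * I)).prod ∧
      Q 2 2 = (l.map fun p => ((p.1 : ℂ))⁻¹).prod := by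
  induction l with
  | nil =>
    refine ⟨fun i j hij => ?_, by simp [Matrix.one_apply], by simp [Matrix.one_apply],
      by simp [Matrix.one_apply]⟩
    simp [Matrix.one_apply, hij.ne]
  | cons p l ih =>
    obtain ⟨htri, h0, h1, h2⟩ := ih
    have h01 := htri 0 1 (by decide)
    have h02 := htri 0 2 (by decide)
    have h12 := htri 1 2 (by decide)
    have hA : ∀ i j : Fin 3, (Mmat p.1 p.2 * Emat) i j =
        !![(p.1 : ℂ), 0, 0;
           -(Real.sqrt 2 : ℝ) * Complex.exp (p.2 * I), Complex.exp (p.2 * I), 0;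
           -((p.1 : ℂ))⁻¹, (Real.sqrt 2 : ℝ) * ((p.1 : ℂ))⁻¹, ((p.1 : ℂ))⁻¹] i j := by
      rw [MmatE]
      exact fun _ _ => rfl
    refine ⟨fun i j hij => ?_, ?_, ?_, ?_⟩
    · fin_cases i <;> fin_cases j <;>
        first
          | exact absurd hij (by decide)
          | simp [List.prod_cons, Matrix.mul_apply, Fin.sum_univ_three, hA, h01, h02, h12]
    · simp [List.prod_cons, Matrix.mul_apply, Fin.sum_univ_three, hA, h01, h02, h12, h0]
    · simp [List.prod_cons, Matrix.mul_apply, Fin.sum_univ_three, hA, h01, h02, h12, h1]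
    · simp [List.prod_cons, Matrix.mul_apply, Fin.sum_univ_three, hA, h01, h02, h12, h2]

lemma charpoly_of_lowTri (Q : Matrix (Fin 3) (Fin 3) ℂ)
    (h01 : Q 0 1 = 0) (h02 : Q 0 2 = 0) (h12 : Q 1 2 = 0) :
    Matrix.charpoly Q =
      (Polynomial.X - Polynomial.C (Q 0 0)) * (Polynomial.X - Polynomial.C (Q 1 1)) *
        (Polynomial.X - Polynomial.C (Q 2 2)) := by
  rw [Matrix.charpoly, Matrix.det_fin_three]
  rw [Matrix.charmatrix_apply_eq, Matrix.charmatrix_apply_eq, Matrix.charmatrix_apply_eq]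
  rw [Matrix.charmatrix_apply_ne _ _ _ (by decide), Matrix.charmatrix_apply_ne _ _ _ (by decide),
    Matrix.charmatrix_apply_ne _ _ _ (by decide), Matrix.charmatrix_apply_ne _ _ _ (by decide),
    Matrix.charmatrix_apply_ne _ _ _ (by decide), Matrix.charmatrix_apply_ne _ _ _ (by decide)]
  rw [h01, h02, h12]
  simp only [map_zero, neg_zero]
  ring

lemma roots_of_lowTri (Q : Matrix (Fin 3) (Fin 3) ℂ)
    (h01 : Q 0 1 = 0) (h02 : Q 0 2 = 0) (h12 : Q 1 2 = 0) (μ : ℂ) :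
    (Matrix.charpoly Q).IsRoot μ ↔ μ = Q 0 0 ∨ μ = Q 1 1 ∨ μ = Q 2 2 := by
  rw [charpoly_of_lowTri Q h01 h02 h12]
  simp [Polynomial.IsRoot, mul_eq_zero, sub_eq_zero, or_assoc]

lemma sSup_triple (a : ℝ) (ha : 0 < a) :
    sSup ({a, 1, a⁻¹} : Set ℝ) = max a a⁻¹ := by
  have h1 : (1 : ℝ) ≤ max a a⁻¹ := by
    rcases le_total 1 a with h | h
    · exact le_max_of_le_left h
    · exact le_max_of_le_right (one_le_inv_iff₀.2 ⟨ha, h⟩)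
  have : ({a, 1, a⁻¹} : Set ℝ) = insert a (insert 1 {a⁻¹}) := rfl
  rw [this, csSup_insert (Set.Finite.bddAbove (by simp)) (by simp),
    csSup_insert (Set.Finite.bddAbove (by simp)) (by simp), csSup_singleton]
  rw [max_comm (1 : ℝ) a⁻¹, ← max_assoc]
  exact max_eq_left h1

lemma specRad_formula (l : List (ℝ × ℝ)) (hx : ∀ p ∈ l, 0 < p.1) :
    specRad ((l.map fun p => Mmat p.1 p.2 * Emat).prod) =
      max (l.map fun p => p.1).prod ((l.map fun p => p.1).prod)⁻¹ := by
  obtain ⟨htri, h0, h1, h2⟩ := key l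
  set Q := (l.map fun p => Mmat p.1 p.2 * Emat).prod with hQ
  have h01 := htri 0 1 (by decide)
  have h02 := htri 0 2 (by decide)
  have h12 := htri 1 2 (by decide)
  set a : ℝ := (l.map fun p => p.1).prod with haa
  have ha : 0 < a := List.prod_pos (by simpa using hx)
  have hcast : ((a : ℝ) : ℂ) = (l.map fun p => ((p.1 : ℂ))).prod := by
    rw [haa, ← Complex.ofRealHom_eq_coe, map_list_prod, List.map_map]
    rfl
  have hQ00 : Q 0 0 = (a : ℂ) := by rw [h0, hcast]
  have hQ22 : Q 2 2 = ((a : ℂ))⁻¹ := by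
    rw [h2, hcast]
    calc (l.map fun p => ((p.1 : ℂ))⁻¹).prod
        = ((l.map fun p => ((p.1 : ℂ))).map (invMonoidHom : ℂ →* ℂ)).prod := by
          rw [List.map_map]; rfl
      _ = ((l.map fun p => ((p.1 : ℂ))).prod)⁻¹ := (map_list_prod _ _).symm
  have habs1 : ‖Q 1 1‖ = 1 := by
    rw [h1, List.norm_prod, List.map_map]
    apply List.prod_eq_one
    intro s hs
    simp only [List.mem_map] at hs
    obtain ⟨p, _, rfl⟩ := hs
    simp [Complex.norm_exp]
  have hset : {s : ℝ | ∃ μ : ℂ, (Matrix.charpoly Q).IsRoot μ ∧ s = ‖μ‖} =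
      ({a, 1, a⁻¹} : Set ℝ) := by
    ext s
    simp only [Set.mem_setOf_eq, Set.mem_insert_iff, Set.mem_singleton_iff]
    constructor
    · rintro ⟨μ, hroot, rfl⟩
      rcases (roots_of_lowTri Q h01 h02 h12 μ).1 hroot with h | h | h
      · left; rw [h, hQ00, Complex.norm_real, Real.norm_eq_abs, abs_of_pos ha]
      · right; left; rw [h, habs1]
      · right; right
        rw [h, hQ22, norm_inv, Complex.norm_real, Real.norm_eq_abs, abs_of_pos ha]
    · rintro (rfl | rfl | rfl)
      · exact ⟨Q 0 0, (roots_of_lowTri Q h01 h02 h12 _).2 (Or.inl rfl),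
          by rw [hQ00, Complex.norm_real, Real.norm_eq_abs, abs_of_pos ha]⟩
      · exact ⟨Q 1 1, (roots_of_lowTri Q h01 h02 h12 _).2 (Or.inr (Or.inl rfl)), habs1.symm⟩
      · exact ⟨Q 2 2, (roots_of_lowTri Q h01 h02 h12 _).2 (Or.inr (Or.inr rfl)),
          by rw [hQ22, norm_inv, Complex.norm_real, Real.norm_eq_abs, abs_of_pos ha]⟩
  rw [specRad, hset, sSup_triple a ha]

theorem specRad_peripheral_preserved (r : ℕ) (x α : Fin r → ℝ) (hx : ∀ j, 0 < x j) :
    let P : Matrix (Fin 3) (Fin 3) ℂ :=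
      (List.ofFn fun j : Fin r => Mmat (x j.rev) (α j.rev) * Emat).prod
    let P₀ : Matrix (Fin 3) (Fin 3) ℂ :=
      (List.ofFn fun j : Fin r => Mmat (x j.rev) 0 * Emat).prod
    specRad P = specRad P₀ ∧ specRad P = max (∏ j, x j) (∏ j, x j)⁻¹ := by
  intro P P₀
  have hprod : (List.ofFn fun j : Fin r => x j.rev).prod = ∏ j, x j := by
    rw [List.prod_ofFn]
    exact Equiv.prod_comp Fin.revPerm x
  have hfor : ∀ β : Fin r → ℝ,
      specRad ((List.ofFn fun j : Fin r => Mmat (x j.rev) (β j) * Emat).prod) =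
        max (∏ j, x j) (∏ j, x j)⁻¹ := by
    intro β
    have hl : (List.ofFn fun j : Fin r => Mmat (x j.rev) (β j) * Emat) =
        (List.ofFn fun j : Fin r => (x j.rev, β j)).map (fun p => Mmat p.1 p.2 * Emat) := by
      rw [List.map_ofFn]; rfl
    have hpos : ∀ p ∈ (List.ofFn fun j : Fin r => (x j.rev, β j)), 0 < p.1 := by
      intro p hp
      rw [List.mem_ofFn] at hp
      obtain ⟨j, rfl⟩ := hp
      exact hx _
    rw [hl, specRad_formula _ hpos]
    have hmp : ((List.ofFn fun j : Fin r => (x j.rev, β j)).map fun p => p.1).prod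
        = ∏ j, x j := by
      rw [List.map_ofFn]
      exact hprod
    rw [hmp]
  exact ⟨(hfor fun j => α j.rev).trans (hfor fun _ => 0).symm, hfor fun j => α j.rev⟩
end
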